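/- Let X be a Hilbert space over 𝕜 (𝕜 = ℝ or ℂ), let (φ_n)_{n∈ℕ} be a Parseval frame for X, and let A : X → X be a bounded linear operator. Then (A φ_n)_{n∈ℕ} is a Parseval frame for X if and only if the adjoint A* is an isometry, i.e. ‖A* f‖ = ‖f‖ for all f ∈ X. -/

import Mathlib

/-- A family `φ : ℕ → X` in a Hilbert space `X` over `𝕜` is a Parseval frame if
`∑' n, |⟨x, φ n⟩|² = ‖x‖²` for every `x ∈ X`. -/
def IsParsevalFrame (𝕜 : Type*) {X : Type*} [RCLike 𝕜] [NormedAddCommGroup X]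
    [InnerProductSpace 𝕜 X] (φ : ℕ → X) : Prop :=
  ∀ x : X, ∑' n, ‖(inner 𝕜 x (φ n) : 𝕜)‖ ^ 2 = ‖x‖ ^ 2

theorem stmt1 (𝕜 X : Type*) [RCLike 𝕜] [NormedAddCommGroup X]
    [InnerProductSpace 𝕜 X] [CompleteSpace X]
    (φ : ℕ → X) (hφ : IsParsevalFrame 𝕜 φ) (A : X →L[𝕜] X) :
    IsParsevalFrame 𝕜 (fun n => A (φ n)) ↔
      ∀ f : X, ‖ContinuousLinearMap.adjoint A f‖ = ‖f‖ := by
  have key : ∀ x : X, ∑' n, ‖(inner 𝕜 x (A (φ n)) : 𝕜)‖ ^ 2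
      = ‖ContinuousLinearMap.adjoint A x‖ ^ 2 := by
    intro x
    have : ∀ n, (inner 𝕜 x (A (φ n)) : 𝕜)
        = inner 𝕜 (ContinuousLinearMap.adjoint A x) (φ n) := by
      intro n
      rw [ContinuousLinearMap.adjoint_inner_left]
    simp_rw [this]
    exact hφ (ContinuousLinearMap.adjoint A x)
  constructor
  · intro h f
    have := (h f).symm.trans (key f)
    have hnn : (0:ℝ) ≤ ‖f‖ := norm_nonneg _
    nlinarith [norm_nonneg (ContinuousLinearMap.adjoint A f)]
  · intro h x
    rw [key x, h x]
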